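/- Let U be uniform on {0,1} and let Y₁,…,Y_K be given by Yᵢ = U ⊕ Nᵢ with N₁,…,N_K i.i.d. Bernoulli(p), independent of U, 0 < p ≤ 1/2, q = 1-p. Then the mutual information I(U; Y₁,…,Y_K) (in bits) equals 1 + Kp log₂ p + Kq log₂ q - ∑_{l=0}^{K-1} C(K-1, l)(q^l p^{K-l} + q^{K-l} p^l) log₂(q^l p^{K-l} + q^{K-l} p^l). -/

import Mathlib

open Real

/-- Shannon entropy in bits of a finitely supported probability mass function,
with the convention `0 * logb 2 0 = 0` (note `Real.logb 2 0 = 0`). -/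
noncomputable def discEntropy {α : Type*} [Fintype α] (f : α → ℝ) : ℝ :=
  -∑ a, f a * logb 2 (f a)

/-- Mutual information (in bits) of the two coordinates of a joint pmf on `α × β`:
`I = H(A) + H(B) - H(A,B)`. -/
noncomputable def discMI {α β : Type*} [Fintype α] [Fintype β] (f : α × β → ℝ) : ℝ :=
  discEntropy (fun a => ∑ b, f (a, b)) + discEntropy (fun b => ∑ a, f (a, b))
    - discEntropy f

/-- Joint pmf of `(U, (Y₁,…,Y_K))` where `U` is uniform on `{0,1}` and
`Yᵢ = U ⊕ Nᵢ` with `Nᵢ` i.i.d. Bernoulli `p` independent of `U`. -/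
noncomputable def jointUY (K : ℕ) (p : ℝ) : ZMod 2 × (Fin K → ZMod 2) → ℝ :=
  fun uy => (1/2) * ∏ i, (if uy.2 i = uy.1 then 1 - p else p)

namespace MutualInfoAux

open Finset

lemma zmod2_cases (b : ZMod 2) : b = 0 ∨ b = 1 := by revert b; decide

lemma sum_zmod2 (g : ZMod 2 → ℝ) : ∑ b, g b = g 0 + g 1 := by
  rw [show (univ : Finset (ZMod 2)) = {0, 1} from rfl]
  simp [Finset.sum_insert, Finset.mem_singleton]

lemma sum_r (p : ℝ) (a : ZMod 2) : ∑ b : ZMod 2, (if b = a then 1 - p else p) = 1 := by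
  rw [sum_zmod2]
  rcases zmod2_cases a with h | h <;> subst h <;> simp

lemma sum_r_log (p : ℝ) (a : ZMod 2) :
    ∑ b : ZMod 2, (if b = a then 1 - p else p) * logb 2 (if b = a then 1 - p else p)
      = (1-p) * logb 2 (1-p) + p * logb 2 p := by
  rw [sum_zmod2]
  rcases zmod2_cases a with h | h <;> subst h <;> simp <;> ring

lemma logb_half : logb 2 (1/2 : ℝ) = -1 := by
  rw [one_div, Real.logb_inv, Real.logb_self_eq_one (by norm_num)]

lemma sum_prod_univ {K : ℕ} (g : Fin K → ZMod 2 → ℝ) :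
    ∑ y : Fin K → ZMod 2, ∏ i, g i (y i) = ∏ i, ∑ b, g i b := by
  have h := Finset.sum_prod_piFinset (univ : Finset (ZMod 2)) g
  rwa [Fintype.piFinset_univ] at h

/-- The support-set equivalence. -/
def eqv (K : ℕ) : (Fin K → ZMod 2) ≃ Finset (Fin K) where
  toFun y := univ.filter fun i => y i = 1
  invFun S := fun i => if i ∈ S then 1 else 0
  left_inv y := by
    funext i
    rcases zmod2_cases (y i) with h | h <;> simp [h]
  right_inv S := by
    ext i
    simp only [mem_filter, mem_univ, true_and]
    by_cases h : i ∈ S <;> simp [h]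

lemma prod_ite_card {K : ℕ} (S : Finset (Fin K)) (a b : ℝ) :
    ∏ i, (if i ∈ S then a else b) = a ^ S.card * b ^ (K - S.card) := by
  rw [Finset.prod_ite, Finset.prod_const, Finset.prod_const]
  congr 2
  · simp
  · have : filter (fun x => x ∉ S) univ = Sᶜ := by ext i; simp
    rw [this, Finset.card_compl, Fintype.card_fin]

lemma sum_finset_card {K : ℕ} (G : ℕ → ℝ) :
    ∑ S : Finset (Fin K), G S.card
      = ∑ w ∈ range (K+1), (K.choose w : ℝ) * G w := by
  rw [← Finset.powerset_univ, Finset.sum_powerset_apply_card]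
  simp only [Finset.card_univ, Fintype.card_fin, nsmul_eq_mul]

lemma sym_sum {K : ℕ} (hK : 1 ≤ K) (t : ℕ → ℝ) (ht : ∀ w ≤ K, t w = t (K - w)) :
    ∑ w ∈ range (K+1), (K.choose w : ℝ) * t w
      = 2 * ∑ l ∈ range K, ((K-1).choose l : ℝ) * t l := by
  obtain ⟨m, rfl⟩ : ∃ m, K = m + 1 := ⟨K - 1, (Nat.succ_pred_eq_of_pos hK).symm⟩
  simp only [Nat.add_sub_cancel] at *
  rw [Finset.sum_range_succ']
  simp only [Nat.choose_succ_succ, Nat.cast_add, add_mul, Finset.sum_add_distrib,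
    Nat.choose_zero_right, Nat.cast_one, one_mul]
  have h2 : ∑ x ∈ range (m+1), (m.choose (x+1) : ℝ) * t (x+1) + t 0
      = ∑ x ∈ range (m+1), (m.choose x : ℝ) * t x := by
    have h := Finset.sum_range_succ' (fun x => (m.choose x : ℝ) * t x) (m+1)
    rw [Finset.sum_range_succ] at h
    simp only [Nat.choose_succ_self, Nat.cast_zero, zero_mul, add_zero,
      Nat.choose_zero_right, Nat.cast_one, one_mul] at h
    linarith
  have h1 : ∑ x ∈ range (m+1), (m.choose x : ℝ) * t (x+1)
      = ∑ x ∈ range (m+1), (m.choose x : ℝ) * t x := by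
    have hr := Finset.sum_range_reflect (fun j => (m.choose j : ℝ) * t j) (m+1)
    rw [← hr]
    refine Finset.sum_congr rfl fun x hx => ?_
    have hxm : x ≤ m := Nat.lt_succ_iff.mp (mem_range.mp hx)
    have e1 : m + 1 - 1 - x = m - x := by omega
    rw [e1, Nat.choose_symm hxm]
    congr 1
    rw [ht (x+1) (by omega)]
    congr 1
    omega
  linarith

lemma binom_one {K : ℕ} (x y : ℝ) (h : x + y = 1) :
    ∑ w ∈ range (K+1), (K.choose w : ℝ) * (x ^ w * y ^ (K - w)) = 1 := by
  have h2 := add_pow x y K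
  rw [h, one_pow] at h2
  rw [h2]
  exact Finset.sum_congr rfl fun w _ => by ring

lemma margU (K : ℕ) (p : ℝ) (a : ZMod 2) :
    ∑ y : Fin K → ZMod 2, jointUY K p (a, y) = 1/2 := by
  unfold jointUY
  simp only
  rw [← Finset.mul_sum]
  rw [sum_prod_univ (fun (_ : Fin K) (b : ZMod 2) => if b = a then 1 - p else p)]
  simp [sum_r p a]

lemma entA (K : ℕ) (p : ℝ) :
    discEntropy (fun a => ∑ y : Fin K → ZMod 2, jointUY K p (a, y)) = 1 := by
  unfold discEntropy
  have h : ∀ a : ZMod 2,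
      (∑ y : Fin K → ZMod 2, jointUY K p (a, y))
        * logb 2 (∑ y : Fin K → ZMod 2, jointUY K p (a, y)) = (1/2) * (-1) := by
    intro a
    rw [margU, logb_half]
  rw [Finset.sum_congr rfl fun a _ => h a, Finset.sum_const, Finset.card_univ]
  norm_num [ZMod.card]

lemma entAB (K : ℕ) (p : ℝ) (hp : 0 < p) (hq : 0 < 1 - p) :
    discEntropy (jointUY K p)
      = 1 - K * ((1-p) * logb 2 (1-p) + p * logb 2 p) := by
  set c : ℝ := (1-p) * logb 2 (1-p) + p * logb 2 p with hc
  unfold discEntropy jointUY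
  rw [Fintype.sum_prod_type]
  have key : ∀ a : ZMod 2,
      ∑ y : Fin K → ZMod 2,
        ((1/2) * ∏ i, (if y i = a then 1 - p else p))
          * logb 2 ((1/2) * ∏ i, (if y i = a then 1 - p else p))
      = -(1/2) + (1/2) * (K * c) := by
    intro a
    set r : ZMod 2 → ℝ := fun b => if b = a then 1 - p else p with hr
    have hrpos : ∀ b, 0 < r b := by
      intro b; by_cases h : b = a <;> simp [hr, h, hp, hq]
    have step1 : ∀ y : Fin K → ZMod 2,
        ((1/2) * ∏ i, r (y i)) * logb 2 ((1/2) * ∏ i, r (y i))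
        = -(1/2) * (∏ i, r (y i))
          + (1/2) * ∑ i, (∏ j, r (y j)) * logb 2 (r (y i)) := by
      intro y
      have hP : 0 < ∏ i, r (y i) := Finset.prod_pos fun i _ => hrpos _
      rw [Real.logb_mul (by norm_num) hP.ne',
        logb_half, Real.logb_prod _ _ (fun i _ => (hrpos _).ne'), ← Finset.mul_sum]
      ring
    calc ∑ y : Fin K → ZMod 2,
          ((1/2) * ∏ i, r (y i)) * logb 2 ((1/2) * ∏ i, r (y i))
        = ∑ y : Fin K → ZMod 2, (-(1/2) * (∏ i, r (y i))
            + (1/2) * ∑ i, (∏ j, r (y j)) * logb 2 (r (y i))) :=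
          Finset.sum_congr rfl fun y _ => step1 y
      _ = -(1/2) * (∑ y : Fin K → ZMod 2, ∏ i, r (y i))
            + (1/2) * ∑ i : Fin K, ∑ y : Fin K → ZMod 2,
                (∏ j, r (y j)) * logb 2 (r (y i)) := by
          rw [Finset.sum_add_distrib, ← Finset.mul_sum, ← Finset.mul_sum,
            Finset.sum_comm]
      _ = -(1/2) + (1/2) * (K * c) := by
          have hsum1 : ∑ y : Fin K → ZMod 2, ∏ i, r (y i) = 1 := by
            rw [sum_prod_univ]
            simp [hr, sum_r p a]
          have hsumi : ∀ i : Fin K,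
              ∑ y : Fin K → ZMod 2, (∏ j, r (y j)) * logb 2 (r (y i)) = c := by
            intro i
            have e1 : ∀ y : Fin K → ZMod 2,
                (∏ j, r (y j)) * logb 2 (r (y i))
                = ∏ j, (r (y j) * (if j = i then logb 2 (r (y j)) else 1)) := by
              intro y
              rw [Finset.prod_mul_distrib, Finset.prod_ite_eq' univ i
                (fun j => logb 2 (r (y j)))]
              simp
            rw [Finset.sum_congr rfl fun y _ => e1 y,
              sum_prod_univ (fun j b => r b * (if j = i then logb 2 (r b) else 1))]
            have e2 : ∀ j : Fin K, (∑ b : ZMod 2,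
                r b * (if j = i then logb 2 (r b) else 1))
                = if j = i then c else 1 := by
              intro j
              by_cases h : j = i
              · simp only [h, if_true]
                rw [hc, ← sum_r_log p a]
              · simp only [h, if_false, mul_one]
                rw [hr]; exact sum_r p a
            rw [Finset.prod_congr rfl fun j _ => e2 j,
              Finset.prod_ite_eq' univ i (fun _ => c)]
            simp
          rw [hsum1, Finset.sum_congr rfl fun i _ => hsumi i, Finset.sum_const,
            Finset.card_univ, Fintype.card_fin, nsmul_eq_mul]
          ring
  simp only
  rw [sum_zmod2 (fun a => ∑ y : Fin K → ZMod 2,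
    ((1/2) * ∏ i, (if y i = a then 1 - p else p))
      * logb 2 ((1/2) * ∏ i, (if y i = a then 1 - p else p))), key 0, key 1]
  ring

lemma entB (K : ℕ) (hK : 1 ≤ K) (p : ℝ) (hp : 0 < p) (hq : 0 < 1 - p) :
    discEntropy (fun y => ∑ a, jointUY K p (a, y))
      = 1 - ∑ l ∈ range K, ((K-1).choose l : ℝ)
          * ((1-p) ^ l * p ^ (K - l) + (1-p) ^ (K - l) * p ^ l)
          * logb 2 ((1-p) ^ l * p ^ (K - l) + (1-p) ^ (K - l) * p ^ l) := by
  set s : ℕ → ℝ := fun w => (1-p) ^ w * p ^ (K - w) + (1-p) ^ (K - w) * p ^ w with hs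
  have spos : ∀ w, 0 < s w := fun w => by
    have := pow_pos hp; have := pow_pos hq
    positivity
  have hmarg : ∀ y : Fin K → ZMod 2,
      (∑ a, jointUY K p (a, y)) = s ((eqv K y).card) / 2 := by
    intro y
    rw [sum_zmod2 (fun a => jointUY K p (a, y))]
    unfold jointUY
    simp only
    have hy0 : ∀ i, (if y i = (0:ZMod 2) then 1-p else p)
        = (if i ∈ eqv K y then p else (1-p)) := by
      intro i
      rcases zmod2_cases (y i) with h | h <;> simp [eqv, h]
    have hy1 : ∀ i, (if y i = (1:ZMod 2) then 1-p else p)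
        = (if i ∈ eqv K y then (1-p) else p) := by
      intro i
      rcases zmod2_cases (y i) with h | h <;> simp [eqv, h]
    rw [Finset.prod_congr rfl fun i _ => hy0 i,
      Finset.prod_congr rfl fun i _ => hy1 i,
      prod_ite_card, prod_ite_card, hs]
    ring
  unfold discEntropy
  rw [Fintype.sum_bijective (eqv K) (eqv K).bijective _
    (fun S => (s S.card / 2) * logb 2 (s S.card / 2))
    (fun y => by simp only; rw [hmarg y]),
    sum_finset_card (fun w => (s w / 2) * logb 2 (s w / 2))]
  have hlog : ∀ w, logb 2 (s w / 2) = logb 2 (s w) - 1 := by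
    intro w
    rw [Real.logb_div (spos w).ne' (by norm_num),
      Real.logb_self_eq_one (by norm_num)]
  have hsplit : ∀ w, (K.choose w : ℝ) * ((s w / 2) * logb 2 (s w / 2))
      = (1/2) * ((K.choose w : ℝ) * (s w * logb 2 (s w)))
        - (1/2) * ((K.choose w : ℝ) * s w) := by
    intro w
    rw [hlog w]; ring
  rw [Finset.sum_congr rfl fun w _ => hsplit w, Finset.sum_sub_distrib,
    ← Finset.mul_sum, ← Finset.mul_sum]
  have hbin : ∑ w ∈ range (K+1), (K.choose w : ℝ) * s w = 2 := by
    have b1 := binom_one (K := K) (1-p) p (by ring)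
    have b2 := binom_one (K := K) p (1-p) (by ring)
    have : ∑ w ∈ range (K+1), (K.choose w : ℝ) * s w
        = ∑ w ∈ range (K+1), (K.choose w : ℝ) * ((1-p)^w * p^(K-w))
          + ∑ w ∈ range (K+1), (K.choose w : ℝ) * (p^w * (1-p)^(K-w)) := by
      rw [← Finset.sum_add_distrib]
      exact Finset.sum_congr rfl fun w _ => by rw [hs]; ring
    rw [this, b1, b2]; norm_num
  have hsym := sym_sum hK (fun w => s w * logb 2 (s w)) (by
    intro w hw
    have : K - (K - w) = w := Nat.sub_sub_self hw
    simp only [hs, this]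
    ring_nf)
  have he : ∑ l ∈ range K, ((K-1).choose l : ℝ) * (s l * logb 2 (s l))
      = ∑ l ∈ range K, ((K-1).choose l : ℝ)
          * ((1-p) ^ l * p ^ (K - l) + (1-p) ^ (K - l) * p ^ l)
          * logb 2 ((1-p) ^ l * p ^ (K - l) + (1-p) ^ (K - l) * p ^ l) :=
    Finset.sum_congr rfl fun l _ => by simp only [hs]; ring
  rw [hbin, hsym, he]
  ring

end MutualInfoAux

theorem mutualInfo_forwarding (K : ℕ) (hK : 1 ≤ K) (p : ℝ) (hp : 0 < p) (hp' : p ≤ 1/2) :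
    discMI (jointUY K p)
      = 1 + K * p * logb 2 p + K * (1-p) * logb 2 (1-p)
        - ∑ l ∈ Finset.range K, (Nat.choose (K-1) l : ℝ)
            * ((1-p) ^ l * p ^ (K - l) + (1-p) ^ (K - l) * p ^ l)
            * logb 2 ((1-p) ^ l * p ^ (K - l) + (1-p) ^ (K - l) * p ^ l) := by
  have hq : 0 < 1 - p := by linarith
  unfold discMI
  rw [MutualInfoAux.entA K p, MutualInfoAux.entB K hK p hp hq,
    MutualInfoAux.entAB K p hp hq]
  ring
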